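/- Let 1 ≤ q < ∞ and k ∈ ℕ, set ξ₀ = (2^{k+2})^q, and let g ∈ S₀(ℝⁿ) satisfy J = ∫₀^∞ t^{1/q − 1} g*(t) dt < ∞. Define Q = { t > 0 : g*(t) ≥ 2^{k+1} g*(ξ₀ t) }. Then ∫_{(0,∞)∖Q} t^{1/q − 1} g*(t) dt ≤ (1/2) J, and consequently J ≤ 2 ∫_Q t^{1/q − 1} g*(t) dt. -/

import Mathlib

open MeasureTheory Set
open scoped ENNReal NNReal BigOperators

noncomputable section

/-- The measure `du/u` on `(0,∞)`. -/
def muLog : Measure ℝ :=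
  (volume.restrict (Set.Ioi (0:ℝ))).withDensity fun u => ENNReal.ofReal u⁻¹

/-- The `𝓛^θ` norm of an `ℝ≥0∞`-valued function on `(0,∞)` (with respect to `du/u`),
for `θ ∈ [1,∞]`; for `θ = ∞` it is the essential supremum. -/
def calLE (θ : ℝ≥0∞) (g : ℝ → ℝ≥0∞) : ℝ≥0∞ :=
  if θ = ∞ then essSup g muLog
  else (∫⁻ t, g t ^ θ.toReal ∂muLog) ^ (1 / θ.toReal)

/-- The `𝓛^θ` norm of a real-valued function on `(0,∞)`. -/
def calL (θ : ℝ≥0∞) (g : ℝ → ℝ) : ℝ≥0∞ :=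
  calLE θ fun t => ENNReal.ofReal |g t|

/-- The distribution function `λ_f(y) = |{x : |f x| > y}|`. -/
def distFn {n : ℕ} (f : (Fin n → ℝ) → ℝ) (y : ℝ) : ℝ≥0∞ :=
  volume {x | y < |f x|}

/-- `f ∈ S₀(ℝⁿ)`: measurable with finite distribution function for all `y > 0`. -/
def MemS0 {n : ℕ} (f : (Fin n → ℝ) → ℝ) : Prop :=
  Measurable f ∧ ∀ y : ℝ, 0 < y → distFn f y < ∞

/-- The non-increasing rearrangement `f*`. -/
def rearr {n : ℕ} (f : (Fin n → ℝ) → ℝ) (t : ℝ) : ℝ :=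
  sInf {y : ℝ | 0 ≤ y ∧ distFn f y ≤ ENNReal.ofReal t}

/-- The real-valued `L^p(ℝⁿ)` norm. -/
def lpR {n : ℕ} (p : ℝ) (f : (Fin n → ℝ) → ℝ) : ℝ :=
  (eLpNorm f (ENNReal.ofReal p) volume).toReal

/-- The difference of degree `k` in direction `j` with step `h`:
`Δ_j^k(h) f (x) = ∑ (-1)^{k-i} C(k,i) f(x + i h e_j)`. -/
def diffOp {n : ℕ} (j : Fin n) (k : ℕ) (h : ℝ) (f : (Fin n → ℝ) → ℝ) :
    (Fin n → ℝ) → ℝ :=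
  fun x => ∑ i ∈ Finset.range (k + 1),
    (-1 : ℝ) ^ (k - i) * (k.choose i : ℝ) * f (x + ((i : ℝ) * h) • (Pi.single j 1 : Fin n → ℝ))

/-- The modulus of continuity `ω_j^k(f;δ)_p = sup_{0<h≤δ} ‖Δ_j^k(h) f‖_p`. -/
def modCont {n : ℕ} (j : Fin n) (k : ℕ) (p : ℝ) (f : (Fin n → ℝ) → ℝ) (δ : ℝ) : ℝ :=
  sSup ((fun h => lpR p (diffOp j k h f)) '' Set.Ioc 0 δ)

/-- The directional Besov seminorm `‖f‖_{b^r_{p,θ;j}}` with difference order `k`. -/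
def besov {n : ℕ} (j : Fin n) (k : ℕ) (r p : ℝ) (θ : ℝ≥0∞)
    (f : (Fin n → ℝ) → ℝ) : ℝ≥0∞ :=
  calL θ fun h => h ^ (-r) * lpR p (diffOp j k h f)

/-- The Lorentz quasinorm `‖f‖_{q,s} = ‖t^{1/q} f*(t)‖_{𝓛^s}`. -/
def lorentz {n : ℕ} (q : ℝ) (s : ℝ≥0∞) (f : (Fin n → ℝ) → ℝ) : ℝ≥0∞ :=
  calL s fun t => t ^ (1 / q) * rearr f t

/-- The norm in the sum space `L¹ + L^{p₀}`. -/
def sumNormE {n : ℕ} (p₀ : ℝ) (f : (Fin n → ℝ) → ℝ) : ℝ≥0∞ :=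
  ⨅ (g : (Fin n → ℝ) → ℝ) (h : (Fin n → ℝ) → ℝ) (_ : f = g + h),
    eLpNorm g 1 volume + eLpNorm h (ENNReal.ofReal p₀) volume

/-- The function `σ(t) = inf { max_j t^{-1/p_j} φ_j(δ_j) : δ_j > 0, ∏ δ_j = t }`. -/
def sigmaFn {n : ℕ} (pp : Fin n → ℝ) (φ : Fin n → ℝ → ℝ) (t : ℝ) : ℝ :=
  sInf {a : ℝ | ∃ d : Fin n → ℝ, (∀ j, 0 < d j) ∧ (∏ j, d j) = t ∧
    a = ⨆ j, t ^ (-(pp j)⁻¹) * φ j (d j)}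

private lemma rearr_nonneg' {n : ℕ} (g : (Fin n → ℝ) → ℝ) (t : ℝ) : 0 ≤ rearr g t :=
  Real.sInf_nonneg fun y hy => hy.1

private lemma rearr_set_nonempty' {n : ℕ} {g : (Fin n → ℝ) → ℝ} (hg : MemS0 g) {t : ℝ}
    (ht : 0 < t) : {y : ℝ | 0 ≤ y ∧ distFn g y ≤ ENNReal.ofReal t}.Nonempty := by
  have hanti : Antitone fun m : ℕ => {x : Fin n → ℝ | (m : ℝ) < |g x|} := by
    intro a b hab x hx
    simp only [Set.mem_setOf_eq] at hx ⊢
    exact lt_of_le_of_lt (by exact_mod_cast hab) hx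
  have hInter : ⋂ m : ℕ, {x : Fin n → ℝ | (m : ℝ) < |g x|} = ∅ := by
    ext x
    simp only [Set.mem_iInter, Set.mem_setOf_eq, Set.mem_empty_iff_false, iff_false, not_forall,
      not_lt]
    obtain ⟨m, hm⟩ := exists_nat_gt |g x|
    exact ⟨m, hm.le⟩
  have htend := tendsto_measure_iInter_atTop (μ := volume)
      (fun m => ((measurableSet_lt measurable_const hg.1.abs).nullMeasurableSet)) hanti
      ⟨1, by simpa [distFn] using (hg.2 1 one_pos).ne⟩
  rw [hInter, measure_empty] at htend
  have hev : ∀ᶠ m : ℕ in Filter.atTop,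
      volume {x : Fin n → ℝ | (m : ℝ) < |g x|} < ENNReal.ofReal t :=
    htend.eventually_lt_const (ENNReal.ofReal_pos.2 ht)
  obtain ⟨m, hm⟩ := hev.exists
  exact ⟨m, Nat.cast_nonneg m, le_of_lt hm⟩

private lemma rearr_anti' {n : ℕ} {g : (Fin n → ℝ) → ℝ} (hg : MemS0 g) {t₁ t₂ : ℝ}
    (h1 : 0 < t₁) (h12 : t₁ ≤ t₂) : rearr g t₂ ≤ rearr g t₁ :=
  csInf_le_csInf ⟨0, fun y hy => hy.1⟩ (rearr_set_nonempty' hg h1)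
    (fun y hy => ⟨hy.1, hy.2.trans (ENNReal.ofReal_le_ofReal h12)⟩)

private lemma measurable_rearrExt' {n : ℕ} {g : (Fin n → ℝ) → ℝ} (hg : MemS0 g) :
    Measurable (fun t : ℝ => if 0 < t then rearr g t else 0) := by
  have hf : ∀ m : ℕ, Measurable fun t : ℝ =>
      (Set.Ioi (((m : ℝ) + 1))⁻¹).indicator (fun s => rearr g (max s ((m : ℝ) + 1)⁻¹)) t := by
    intro m
    have hpos : (0 : ℝ) < ((m : ℝ) + 1)⁻¹ := by positivity
    have hA : Antitone fun s : ℝ => rearr g (max s ((m : ℝ) + 1)⁻¹) := fun a b hab =>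
      rearr_anti' hg (lt_of_lt_of_le hpos (le_max_right _ _)) (max_le_max hab le_rfl)
    exact hA.measurable.indicator measurableSet_Ioi
  apply measurable_of_tendsto_metrizable' Filter.atTop hf
  rw [tendsto_pi_nhds]
  intro t
  by_cases ht : 0 < t
  · obtain ⟨M, hM⟩ := exists_nat_gt t⁻¹
    apply tendsto_const_nhds.congr'
    filter_upwards [Filter.eventually_ge_atTop M] with m hm
    have h1 : ((m : ℝ) + 1)⁻¹ < t := by
      rw [inv_lt_comm₀ (by positivity) ht]
      calc t⁻¹ < M := hM
        _ ≤ (m : ℝ) + 1 := by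
            have : (M : ℝ) ≤ (m : ℝ) := Nat.cast_le.2 hm
            linarith
    rw [if_pos ht, Set.indicator_of_mem (Set.mem_Ioi.2 h1), max_eq_left h1.le]
  · apply tendsto_const_nhds.congr
    intro m
    have : t ∉ Set.Ioi ((m : ℝ) + 1)⁻¹ := by
      simp only [Set.mem_Ioi, not_lt]
      exact le_trans (not_lt.1 ht) (by positivity)
    rw [if_neg ht, Set.indicator_of_notMem this]

private lemma subst_lemma' {n : ℕ} (g : (Fin n → ℝ) → ℝ) {c : ℝ} (a : ℝ) (hc : 0 < c) :
    ∫⁻ t in Set.Ioi (0 : ℝ), ENNReal.ofReal (t ^ a * rearr g (c * t)) =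
      ENNReal.ofReal (c⁻¹ * c ^ (-a)) *
        ∫⁻ u in Set.Ioi (0 : ℝ), ENNReal.ofReal (u ^ a * rearr g u) := by
  set F : ℝ → ℝ≥0∞ := fun u => ENNReal.ofReal ((u / c) ^ a * rearr g u) with hF
  have h1 : ∀ t : ℝ, ENNReal.ofReal (t ^ a * rearr g (c * t)) = F (c * t) := by
    intro t
    simp only [hF, mul_div_cancel_left₀ _ hc.ne']
  simp only [h1]
  have hemb : MeasurableEmbedding (fun t : ℝ => c * t) :=
    (Homeomorph.mulLeft₀ c hc.ne').measurableEmbedding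
  rw [← hemb.lintegral_map]
  have hpre : (fun t : ℝ => c * t) ⁻¹' (Set.Ioi 0) = Set.Ioi (0 : ℝ) := by
    ext t
    simp only [Set.mem_preimage, Set.mem_Ioi]
    constructor
    · intro h
      by_contra hle
      push_neg at hle
      nlinarith
    · exact fun h => mul_pos hc h
  have hmap : Measure.map (fun t : ℝ => c * t) (volume.restrict (Set.Ioi 0)) =
      ENNReal.ofReal c⁻¹ • volume.restrict (Set.Ioi (0 : ℝ)) := by
    conv_lhs => rw [← hpre]
    rw [← Measure.restrict_map (measurable_const_mul c) measurableSet_Ioi,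
      Real.map_volume_mul_left hc.ne', Measure.restrict_smul,
      abs_of_pos (inv_pos.2 hc)]
  rw [hmap, lintegral_smul_measure]
  have h2 : ∫⁻ u in Set.Ioi (0 : ℝ), F u =
      ∫⁻ u in Set.Ioi (0 : ℝ),
        ENNReal.ofReal (c ^ (-a)) * ENNReal.ofReal (u ^ a * rearr g u) := by
    apply setLIntegral_congr_fun measurableSet_Ioi
    intro u hu
    have hu' : (0 : ℝ) < u := hu
    simp only [hF]
    have : (u / c) ^ a * rearr g u = c ^ (-a) * (u ^ a * rearr g u) := by
      rw [Real.div_rpow hu'.le hc.le, Real.rpow_neg hc.le]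
      ring
    rw [this, ENNReal.ofReal_mul (Real.rpow_nonneg hc.le _)]
  rw [h2, lintegral_const_mul' _ _ ENNReal.ofReal_ne_top, smul_eq_mul, ← mul_assoc,
    ← ENNReal.ofReal_mul (inv_nonneg.2 hc.le)]

/-- reduction of the Lorentz integral `J` to the set `Q` where the
rearrangement does not decay too fast. -/
theorem stmt14 (n : ℕ) (q : ℝ) (hq : 1 ≤ q) (k : ℕ)
    (g : (Fin n → ℝ) → ℝ) (hg : MemS0 g)
    (ξ₀ : ℝ) (hξ₀ : ξ₀ = ((2 : ℝ) ^ (k + 2)) ^ q)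
    (Q : Set ℝ) (hQ : Q = {t : ℝ | 0 < t ∧ (2 : ℝ) ^ (k + 1) * rearr g (ξ₀ * t) ≤ rearr g t})
    (J : ℝ≥0∞) (hJ : J = ∫⁻ t in Set.Ioi (0 : ℝ), ENNReal.ofReal (t ^ (q⁻¹ - 1) * rearr g t))
    (hJfin : J < ∞) :
    (∫⁻ t in Set.Ioi (0 : ℝ) \ Q, ENNReal.ofReal (t ^ (q⁻¹ - 1) * rearr g t)) ≤ J / 2 ∧
    J ≤ 2 * ∫⁻ t in Q, ENNReal.ofReal (t ^ (q⁻¹ - 1) * rearr g t) := by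
  have hq0 : 0 < q := lt_of_lt_of_le one_pos hq
  set a : ℝ := q⁻¹ - 1 with ha
  have hx : (0 : ℝ) < 2 ^ (k + 2) := by positivity
  have hc : 0 < ξ₀ := by rw [hξ₀]; exact Real.rpow_pos_of_pos hx q
  -- the constant computation
  have hconst : (2 : ℝ) ^ (k + 1) * (ξ₀⁻¹ * ξ₀ ^ (-a)) = 1 / 2 := by
    have h1 : ξ₀⁻¹ * ξ₀ ^ (-a) = ξ₀ ^ (-(q⁻¹)) := by
      rw [← Real.rpow_neg_one ξ₀, ← Real.rpow_add hc]
      congr 1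
      rw [ha]; ring
    have h2 : ξ₀ ^ (-(q⁻¹)) = ((2 : ℝ) ^ (k + 2))⁻¹ := by
      rw [hξ₀, ← Real.rpow_mul hx.le, mul_neg, mul_inv_cancel₀ hq0.ne', Real.rpow_neg_one]
    rw [h1, h2, pow_succ]
    have h3 : (0:ℝ) < 2 ^ (k+1) := by positivity
    field_simp
    ring
  -- measurability of Q
  set R : ℝ → ℝ := fun t => if 0 < t then rearr g t else 0 with hR
  have hRmeas : Measurable R := measurable_rearrExt' hg
  have hQmeas : MeasurableSet Q := by
    have hQeq : Q = Set.Ioi 0 ∩ {t : ℝ | (2 : ℝ) ^ (k + 1) * R (ξ₀ * t) ≤ R t} := by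
      rw [hQ]
      ext t
      simp only [Set.mem_setOf_eq, Set.mem_inter_iff, Set.mem_Ioi]
      constructor
      · rintro ⟨ht, hle⟩
        refine ⟨ht, ?_⟩
        rw [hR]
        simp only [if_pos ht, if_pos (mul_pos hc ht)]
        exact hle
      · rintro ⟨ht, hle⟩
        refine ⟨ht, ?_⟩
        rw [hR] at hle
        simpa only [if_pos ht, if_pos (mul_pos hc ht)] using hle
    rw [hQeq]
    exact measurableSet_Ioi.inter
      (measurableSet_le (measurable_const.mul (hRmeas.comp (measurable_const_mul ξ₀))) hRmeas)
  -- Step 1: the bound on the complement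
  have step1 : (∫⁻ t in Set.Ioi (0 : ℝ) \ Q, ENNReal.ofReal (t ^ a * rearr g t)) ≤
      ∫⁻ t in Set.Ioi (0 : ℝ) \ Q,
        ENNReal.ofReal ((2 : ℝ) ^ (k + 1)) * ENNReal.ofReal (t ^ a * rearr g (ξ₀ * t)) := by
    apply setLIntegral_mono' (measurableSet_Ioi.diff hQmeas)
    intro t ht
    have ht0 : (0 : ℝ) < t := ht.1
    have hlt : rearr g t < (2 : ℝ) ^ (k + 1) * rearr g (ξ₀ * t) := by
      by_contra hcon
      push_neg at hcon
      exact ht.2 (by rw [hQ]; exact ⟨ht0, hcon⟩)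
    calc ENNReal.ofReal (t ^ a * rearr g t)
        ≤ ENNReal.ofReal (t ^ a * ((2 : ℝ) ^ (k + 1) * rearr g (ξ₀ * t))) :=
          ENNReal.ofReal_le_ofReal
            (mul_le_mul_of_nonneg_left hlt.le (Real.rpow_nonneg ht0.le a))
      _ = ENNReal.ofReal ((2 : ℝ) ^ (k + 1)) * ENNReal.ofReal (t ^ a * rearr g (ξ₀ * t)) := by
          rw [← ENNReal.ofReal_mul (by positivity)]
          congr 1
          ring
  have step2 : (∫⁻ t in Set.Ioi (0 : ℝ) \ Q,
        ENNReal.ofReal ((2 : ℝ) ^ (k + 1)) * ENNReal.ofReal (t ^ a * rearr g (ξ₀ * t))) ≤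
      ∫⁻ t in Set.Ioi (0 : ℝ),
        ENNReal.ofReal ((2 : ℝ) ^ (k + 1)) * ENNReal.ofReal (t ^ a * rearr g (ξ₀ * t)) :=
    lintegral_mono' (Measure.restrict_mono Set.diff_subset le_rfl) le_rfl
  have step3 : (∫⁻ t in Set.Ioi (0 : ℝ),
        ENNReal.ofReal ((2 : ℝ) ^ (k + 1)) * ENNReal.ofReal (t ^ a * rearr g (ξ₀ * t))) =
      ENNReal.ofReal (1 / 2) * J := by
    rw [lintegral_const_mul' _ _ ENNReal.ofReal_ne_top, subst_lemma' g a hc, hJ, ← mul_assoc,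
      ← ENNReal.ofReal_mul (by positivity), hconst]
  have hhalf : ENNReal.ofReal (1 / 2) * J = J / 2 := by
    rw [one_div, ENNReal.ofReal_inv_of_pos two_pos, ENNReal.ofReal_ofNat,
      ENNReal.div_eq_inv_mul]
  have part1 : (∫⁻ t in Set.Ioi (0 : ℝ) \ Q, ENNReal.ofReal (t ^ a * rearr g t)) ≤ J / 2 := by
    rw [← hhalf, ← step3]
    exact step1.trans step2
  refine ⟨part1, ?_⟩
  -- Part 2
  have hsub : Set.Ioi (0 : ℝ) ⊆ (Set.Ioi (0 : ℝ) \ Q) ∪ Q := fun t ht =>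
    (em (t ∈ Q)).elim Or.inr fun h => Or.inl ⟨ht, h⟩
  have hJle : J ≤ (∫⁻ t in Set.Ioi (0 : ℝ) \ Q, ENNReal.ofReal (t ^ a * rearr g t)) +
      ∫⁻ t in Q, ENNReal.ofReal (t ^ a * rearr g t) := by
    rw [hJ]
    exact (lintegral_mono' (Measure.restrict_mono hsub le_rfl) le_rfl).trans
      (lintegral_union_le _ _ _)
  have hJhalf_ne : J / 2 ≠ ∞ := (ENNReal.div_lt_top hJfin.ne two_ne_zero).ne
  have h6 : J / 2 + J / 2 ≤ J / 2 + ∫⁻ t in Q, ENNReal.ofReal (t ^ a * rearr g t) := by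
    rw [ENNReal.add_halves]
    exact hJle.trans (add_le_add_left part1 _)
  have h7 : J / 2 ≤ ∫⁻ t in Q, ENNReal.ofReal (t ^ a * rearr g t) :=
    (ENNReal.add_le_add_iff_left hJhalf_ne).1 h6
  calc J = 2 * (J / 2) := (ENNReal.mul_div_cancel two_ne_zero ENNReal.ofNat_ne_top).symm
    _ ≤ 2 * ∫⁻ t in Q, ENNReal.ofReal (t ^ a * rearr g t) := mul_le_mul_right h7 2

end
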